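/- Let p : 2^V → ℤ be a skew-supermodular set function and (H = (V, E), w : E → ℤ₊) a weighted hypergraph with b_{(H,w)}(Z) ≥ p(Z) for all Z ⊆ V. Let X, Y ⊆ V be tight (i.e., b_{(H,w)}(X) = p(X) and b_{(H,w)}(Y) = p(Y)) with X ∩ Y ≠ ∅. If there exists a hyperedge e ∈ E with positive weight intersecting X ∩ Y and intersecting at most one of X − Y and Y − X, then X ∪ Y and X ∩ Y are both tight. -/

import Mathlib

/-- Coverage function of a weighted hypergraph: total weight of hyperedges
intersecting `X`. -/
def coverage {V : Type*} [DecidableEq V] (E : Finset (Finset V)) (w : Finset V → ℕ)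
    (X : Finset V) : ℤ :=
  ∑ e ∈ E.filter (fun e => (e ∩ X).Nonempty), (w e : ℤ)

/-- A set function is skew-supermodular if one of the two supermodular-type
inequalities holds for every pair of sets. -/
def SkewSupermodular {V : Type*} [DecidableEq V] (p : Finset V → ℤ) : Prop :=
  ∀ X Y : Finset V, p X + p Y ≤ p (X ∩ Y) + p (X ∪ Y) ∨
    p X + p Y ≤ p (X \ Y) + p (Y \ X)

lemma coverage_eq_sum_ite {V : Type*} [DecidableEq V] (E : Finset (Finset V))
    (w : Finset V → ℕ) (X : Finset V) :
    coverage E w X = ∑ f ∈ E, (if (f ∩ X).Nonempty then (w f : ℤ) else 0) := by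
  rw [coverage, Finset.sum_filter]

/-- Uncrossing lemma for tight sets: if `X`, `Y` are tight, `X ∩ Y ≠ ∅`, and some
positively weighted hyperedge intersects `X ∩ Y` but at most one of `X − Y`, `Y − X`,
then `X ∪ Y` and `X ∩ Y` are tight. -/
theorem tight_uncrossing {V : Type*} [Fintype V] [DecidableEq V]
    (E : Finset (Finset V)) (w : Finset V → ℕ) (p : Finset V → ℤ)
    (hp : SkewSupermodular p)
    (hcover : ∀ Z : Finset V, p Z ≤ coverage E w Z)
    (X Y : Finset V)
    (hX : coverage E w X = p X) (hY : coverage E w Y = p Y)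
    (hXY : (X ∩ Y).Nonempty)
    (e : Finset V) (he : e ∈ E) (hwe : 0 < w e)
    (heXY : (e ∩ (X ∩ Y)).Nonempty)
    (hside : e ∩ (X \ Y) = ∅ ∨ e ∩ (Y \ X) = ∅) :
    coverage E w (X ∪ Y) = p (X ∪ Y) ∧ coverage E w (X ∩ Y) = p (X ∩ Y) := by
  have key := coverage_eq_sum_ite E w
  rcases hp X Y with h1 | h2
  · -- submodular case
    have sub : coverage E w (X ∩ Y) + coverage E w (X ∪ Y)
        ≤ coverage E w X + coverage E w Y := by
      rw [key X, key Y, key (X ∩ Y), key (X ∪ Y),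
        ← Finset.sum_add_distrib, ← Finset.sum_add_distrib]
      apply Finset.sum_le_sum
      intro f _
      have hwnn : (0:ℤ) ≤ (w f : ℤ) := Int.natCast_nonneg _
      have hi : (f ∩ (X ∩ Y)).Nonempty → (f ∩ X).Nonempty ∧ (f ∩ Y).Nonempty := by
        rintro ⟨a, ha⟩
        simp only [Finset.mem_inter] at ha
        exact ⟨⟨a, Finset.mem_inter.mpr ⟨ha.1, ha.2.1⟩⟩,
          ⟨a, Finset.mem_inter.mpr ⟨ha.1, ha.2.2⟩⟩⟩
      have hu : (f ∩ (X ∪ Y)).Nonempty → (f ∩ X).Nonempty ∨ (f ∩ Y).Nonempty := by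
        rintro ⟨a, ha⟩
        simp only [Finset.mem_inter, Finset.mem_union] at ha
        rcases ha.2 with h | h
        · exact Or.inl ⟨a, Finset.mem_inter.mpr ⟨ha.1, h⟩⟩
        · exact Or.inr ⟨a, Finset.mem_inter.mpr ⟨ha.1, h⟩⟩
      by_cases hx : (f ∩ X).Nonempty <;> by_cases hy : (f ∩ Y).Nonempty <;>
        split_ifs <;> simp_all <;> omega
    have hc1 := hcover (X ∩ Y)
    have hc2 := hcover (X ∪ Y)
    constructor <;> linarith
  · -- skew case: derive contradiction
    exfalso
    have hx : (e ∩ X).Nonempty := by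
      obtain ⟨a, ha⟩ := heXY
      simp only [Finset.mem_inter] at ha
      exact ⟨a, Finset.mem_inter.mpr ⟨ha.1, ha.2.1⟩⟩
    have hy : (e ∩ Y).Nonempty := by
      obtain ⟨a, ha⟩ := heXY
      simp only [Finset.mem_inter] at ha
      exact ⟨a, Finset.mem_inter.mpr ⟨ha.1, ha.2.2⟩⟩
    have diff : coverage E w (X \ Y) + coverage E w (Y \ X) + (w e : ℤ)
        ≤ coverage E w X + coverage E w Y := by
      have hsum : (w e : ℤ) ≤ ∑ f ∈ E,
          ((if (f ∩ X).Nonempty then (w f : ℤ) else 0)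
            + (if (f ∩ Y).Nonempty then (w f : ℤ) else 0)
            - (if (f ∩ (X \ Y)).Nonempty then (w f : ℤ) else 0)
            - (if (f ∩ (Y \ X)).Nonempty then (w f : ℤ) else 0)) := by
        have hDe : (w e : ℤ) ≤ (if (e ∩ X).Nonempty then (w e : ℤ) else 0)
            + (if (e ∩ Y).Nonempty then (w e : ℤ) else 0)
            - (if (e ∩ (X \ Y)).Nonempty then (w e : ℤ) else 0)
            - (if (e ∩ (Y \ X)).Nonempty then (w e : ℤ) else 0) := by
          have hwnn : (0:ℤ) ≤ (w e : ℤ) := Int.natCast_nonneg _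
          rcases hside with h | h <;>
            simp only [hx, hy, h, Finset.not_nonempty_empty, if_true, if_false,
              Finset.not_nonempty_iff_eq_empty] <;> split_ifs <;> omega
        refine le_trans hDe (Finset.single_le_sum (f := fun f => (if (f ∩ X).Nonempty then (w f : ℤ) else 0)
            + (if (f ∩ Y).Nonempty then (w f : ℤ) else 0)
            - (if (f ∩ (X \ Y)).Nonempty then (w f : ℤ) else 0)
            - (if (f ∩ (Y \ X)).Nonempty then (w f : ℤ) else 0)) ?_ he)
        intro f _
        have hwnn : (0:ℤ) ≤ (w f : ℤ) := Int.natCast_nonneg _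
        have hdx : (f ∩ (X \ Y)).Nonempty → (f ∩ X).Nonempty := by
          rintro ⟨a, ha⟩
          simp only [Finset.mem_inter, Finset.mem_sdiff] at ha
          exact ⟨a, Finset.mem_inter.mpr ⟨ha.1, ha.2.1⟩⟩
        have hdy : (f ∩ (Y \ X)).Nonempty → (f ∩ Y).Nonempty := by
          rintro ⟨a, ha⟩
          simp only [Finset.mem_inter, Finset.mem_sdiff] at ha
          exact ⟨a, Finset.mem_inter.mpr ⟨ha.1, ha.2.1⟩⟩
        split_ifs <;> simp_all <;> omega
      rw [key X, key Y, key (X \ Y), key (Y \ X)]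
      simp only [Finset.sum_sub_distrib, Finset.sum_add_distrib] at hsum
      linarith
    have hc1 := hcover (X \ Y)
    have hc2 := hcover (Y \ X)
    have hwpos : (0:ℤ) < (w e : ℤ) := Int.natCast_pos.mpr hwe
    linarith
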